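/- arXiv:2602.07593 — 5 statements merged into one kernel-verified Lean document; each statement's English description precedes it below -/
import Mathlib

section
/- Let P_1, ..., P_n (n ≥ 2) be strict linear orders on a finite set 𝒜 such that the swap distance between any two of them is at most 1. Then there exists a single pair of elements {A, A'} such that for every i, either P_i = P_1 or P_i is obtained from P_1 by swapping A and A' (which are adjacent in P_1). -/
variable {α : Type*}

/-- Swap distance: number of ordered pairs `(a,b)` with `a ≻_P b` and `b ≻_Q a`.
For strict linear orders this counts each disagreeing unordered pair exactly once. -/
noncomputable def swapDist (P Q : α → α → Prop) : ℕ :=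
  Set.ncard {p : α × α | P p.1 p.2 ∧ Q p.2 p.1}

/-- `a` and `b` are adjacent in `P` (with `a` just above `b`): `P a b` and nothing in between. -/
def Adjacent (P : α → α → Prop) (a b : α) : Prop :=
  P a b ∧ ¬ ∃ c, P a c ∧ P c b

/-- `Q` is obtained from `P` by swapping the adjacent pair `{a, b}`:
`Q` reverses the pair and agrees with `P` on every other pair. -/
def SwapOf (P Q : α → α → Prop) (a b : α) : Prop :=
  Adjacent P a b ∧ Q b a ∧
    ∀ x y, ({x, y} : Set α) ≠ {a, b} → (Q x y ↔ P x y)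

/-- Number of voters preferring `x` to `y`. -/
noncomputable def majCount {n : ℕ} (P : Fin n → α → α → Prop) (x y : α) : ℕ :=
  Set.ncard {i | P i x y}

/-- Strict pairwise majority relation. -/
def StrictMaj {n : ℕ} (P : Fin n → α → α → Prop) (x y : α) : Prop :=
  majCount P y x < majCount P x y

/-- Weak pairwise majority relation. -/
def WeakMaj {n : ℕ} (P : Fin n → α → α → Prop) (x y : α) : Prop :=
  majCount P y x ≤ majCount P x y

/-- `P` is single-peaked with respect to the axis `L`: there is a peak `b`
(the `P`-maximum) such that whenever `a` lies between `c` and the peak along `L`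
(weakly on the peak side), `a ≻_P c`. -/
def SinglePeaked (L P : α → α → Prop) : Prop :=
  ∃ b : α, (∀ a, a ≠ b → P b a) ∧
    ∀ a c : α, ((L b a ∨ b = a) ∧ L a c) ∨ (L c a ∧ (L a b ∨ a = b)) → P a c

section Aux
variable [Fintype α]

lemma dist_zero' {P Q : α → α → Prop} (hP : IsStrictTotalOrder α P)
    (hQ : IsStrictTotalOrder α Q) (h : swapDist P Q = 0) :
    ∀ x y, Q x y ↔ P x y := by
  have hempty : {p : α × α | P p.1 p.2 ∧ Q p.2 p.1} = ∅ :=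
    (Set.ncard_eq_zero (Set.toFinite _)).mp h
  have hmem : ∀ x y, ¬ (P x y ∧ Q y x) := by
    intro x y hxy
    have : (x, y) ∈ {p : α × α | P p.1 p.2 ∧ Q p.2 p.1} := hxy
    simp [hempty] at this
  intro x y
  constructor
  · intro hq
    rcases (haveI := hP; trichotomous_of (r := P) x y) with h1 | h1 | h1
    · exact h1
    · subst h1; exact absurd hq (hQ.irrefl x)
    · exact absurd ⟨h1, hq⟩ (hmem y x)
  · intro hp
    rcases (haveI := hQ; trichotomous_of (r := Q) x y) with h1 | h1 | h1
    · exact h1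
    · subst h1; exact absurd hp (hP.irrefl x)
    · exact absurd ⟨hp, h1⟩ (hmem x y)

lemma dist_one' {P Q : α → α → Prop} (hP : IsStrictTotalOrder α P)
    (hQ : IsStrictTotalOrder α Q) (h : swapDist P Q = 1) :
    ∃ a b, SwapOf P Q a b := by
  obtain ⟨⟨a, b⟩, hab⟩ := Set.ncard_eq_one.mp h
  have hmem : ∀ x y : α, (P x y ∧ Q y x) ↔ (x = a ∧ y = b) := by
    intro x y
    constructor
    · intro hxy
      have : (x, y) ∈ {p : α × α | P p.1 p.2 ∧ Q p.2 p.1} := hxy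
      rw [hab] at this
      simpa [Prod.ext_iff] using this
    · rintro ⟨rfl, rfl⟩
      have : (x, y) ∈ {p : α × α | P p.1 p.2 ∧ Q p.2 p.1} := by
        rw [hab]; rfl
      exact this
  obtain ⟨hPab, hQba⟩ := (hmem a b).mpr ⟨rfl, rfl⟩
  have hne : a ≠ b := by rintro rfl; exact hP.irrefl a hPab
  have hside : ∀ x y, ({x, y} : Set α) ≠ {a, b} → (Q x y ↔ P x y) := by
    intro x y hxy
    rcases eq_or_ne x y with rfl | hxyne
    · constructor
      · intro h'; exact absurd h' (hQ.irrefl x)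
      · intro h'; exact absurd h' (hP.irrefl x)
    have h1 : ¬ (x = a ∧ y = b) := by
      rintro ⟨rfl, rfl⟩; exact hxy rfl
    have h2 : ¬ (y = a ∧ x = b) := by
      rintro ⟨rfl, rfl⟩; exact hxy (Set.pair_comm _ _)
    constructor
    · intro hq
      rcases (haveI := hP; trichotomous_of (r := P) x y) with h' | h' | h'
      · exact h'
      · exact absurd h' hxyne
      · exact absurd ((hmem y x).mp ⟨h', hq⟩) h2
    · intro hp
      rcases (haveI := hQ; trichotomous_of (r := Q) x y) with h' | h' | h'
      · exact h'
      · exact absurd h' hxyne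
      · exact absurd ((hmem x y).mp ⟨hp, h'⟩) h1
  refine ⟨a, b, ⟨hPab, ?_⟩, hQba, hside⟩
  rintro ⟨c, hac, hcb⟩
  have hca : c ≠ a := by rintro rfl; exact hP.irrefl c hac
  have hcb' : c ≠ b := by rintro rfl; exact hP.irrefl c hcb
  have e1 : ({a, c} : Set α) ≠ {a, b} := by
    intro he
    have : c ∈ ({a, b} : Set α) := he ▸ (by simp : c ∈ ({a, c} : Set α))
    rcases this with h' | h' <;> [exact hca h'; exact hcb' h']
  have e2 : ({c, b} : Set α) ≠ {a, b} := by
    intro he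
    have : c ∈ ({a, b} : Set α) := he ▸ (by simp : c ∈ ({c, b} : Set α))
    rcases this with h' | h' <;> [exact hca h'; exact hcb' h']
  have q1 : Q a c := (hside a c e1).mpr hac
  have q2 : Q c b := (hside c b e2).mpr hcb
  exact hQ.irrefl a (hQ.trans _ _ _ (hQ.trans _ _ _ q1 q2) hQba)

lemma swaps_far' {P Q R : α → α → Prop} {a b c d : α}
    (h1 : SwapOf P Q a b) (h2 : SwapOf P R c d)
    (hne : ({a, b} : Set α) ≠ ({c, d} : Set α)) : 2 ≤ swapDist Q R := by
  have hRab : R a b := (h2.2.2 a b hne).mpr h1.1.1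
  have hQcd : Q c d := (h1.2.2 c d (Ne.symm hne)).mpr h2.1.1
  have hsub : ({(b, a), (c, d)} : Set (α × α)) ⊆
      {p : α × α | Q p.1 p.2 ∧ R p.2 p.1} := by
    intro p hp
    rcases hp with rfl | hp
    · exact ⟨h1.2.1, hRab⟩
    · rw [Set.mem_singleton_iff] at hp; subst hp
      exact ⟨hQcd, h2.2.1⟩
  have hne2 : ((b, a) : α × α) ≠ (c, d) := by
    rintro h
    obtain ⟨rfl, rfl⟩ := Prod.mk.injEq .. ▸ Prod.ext_iff.mp h
    exact hne (Set.pair_comm a b ▸ rfl)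
  calc 2 = ({(b, a), (c, d)} : Set (α × α)).ncard := (Set.ncard_pair hne2).symm
    _ ≤ _ := Set.ncard_le_ncard hsub (Set.toFinite _)

end Aux

/-- In a profile with pairwise swap distance at most 1, there is a single pair
`{A, A'}` such that every order equals `P 1` or is obtained from `P 1` by
swapping that (adjacent) pair. -/
theorem stmt2 [Fintype α] [Nonempty α] {n : ℕ} (hn : 2 ≤ n)
    (P : Fin n → α → α → Prop) (hP : ∀ i, IsStrictTotalOrder α (P i))
    (hd : ∀ i j, swapDist (P i) (P j) ≤ 1) :
    ∃ A A' : α, ∀ i,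
      (∀ x y, P i x y ↔ P (⟨0, by omega⟩ : Fin n) x y) ∨
        SwapOf (P (⟨0, by omega⟩ : Fin n)) (P i) A A' := by
  set i0 : Fin n := ⟨0, by omega⟩ with hi0
  by_cases hall : ∀ i, ∀ x y, P i x y ↔ P i0 x y
  · obtain ⟨a⟩ := ‹Nonempty α›
    exact ⟨a, a, fun i => Or.inl (hall i)⟩
  · obtain ⟨j, hj⟩ := not_forall.mp hall
    have hdj : swapDist (P i0) (P j) = 1 := by
      have h1 := hd i0 j
      interval_cases h : swapDist (P i0) (P j)
      · exact absurd (dist_zero' (hP i0) (hP j) h) hj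
      · rfl
    obtain ⟨a, b, hab⟩ := dist_one' (hP i0) (hP j) hdj
    refine ⟨a, b, fun i => ?_⟩
    rcases Nat.le_one_iff_eq_zero_or_eq_one.mp (hd i0 i) with h0 | h1
    · exact Or.inl (dist_zero' (hP i0) (hP i) h0)
    · obtain ⟨c, d, hcd⟩ := dist_one' (hP i0) (hP i) h1
      by_cases hset : ({c, d} : Set α) = ({a, b} : Set α)
      · have hcmem : c ∈ ({a, b} : Set α) := hset ▸ (by simp : c ∈ ({c, d} : Set α))
        have hdmem : d ∈ ({a, b} : Set α) := hset ▸ (by simp : d ∈ ({c, d} : Set α))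
        have hcdne : c ≠ d := by rintro rfl; exact (hP i0).irrefl c hcd.1.1
        rcases hcmem with rfl | rfl
        · rcases hdmem with rfl | rfl
          · exact absurd rfl hcdne
          · exact Or.inr hcd
        · rcases hdmem with rfl | rfl
          · exact absurd hcd.1.1
              (fun h => (hP i0).irrefl d ((hP i0).trans _ _ _ hab.1.1 h))
          · exact absurd rfl hcdne
      · exfalso
        have := swaps_far' hab hcd (fun h => hset h.symm)
        have := hd j i
        omega
end

section
/- Let P_1, ..., P_n be strict linear orders on a finite set 𝒜 with pairwise swap distance at most 1. Define the weak majority relation by A ≽_M A' iff |{i : A ≻_{P_i} A'}| ≥ |{i : A' ≻_{P_i} A}|. Then ≽_M is complete and transitive on 𝒜. -/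
variable {α : Type*}

/-- For a profile of strict linear orders with pairwise swap distance at most 1,
the weak majority relation is complete and transitive. -/
theorem stmt3 [Fintype α] (hcard : 3 ≤ Fintype.card α) {n : ℕ}
    (P : Fin n → α → α → Prop) (hP : ∀ i, IsStrictTotalOrder α (P i))
    (hd : ∀ i j, swapDist (P i) (P j) ≤ 1) :
    (∀ x y : α, WeakMaj P x y ∨ WeakMaj P y x) ∧ Transitive (WeakMaj P) := by
  classical
  have htot : ∀ i (a b : α), a ≠ b → P i a b ∨ P i b a := by
    intro i a b hab
    by_contra hne
    exact hab ((hP i).trichotomous a b (fun h => hne (Or.inl h)) (fun h => hne (Or.inr h)))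
  have htr : ∀ i (a b c : α), P i a b → P i b c → P i a c :=
    fun i a b c h1 h2 => (hP i).trans a b c h1 h2
  have hasym : ∀ i (a b : α), P i a b → ¬ P i b a :=
    fun i a b h1 h2 => (hP i).irrefl a (htr i a b a h1 h2)
  -- two disagreements force swap distance ≥ 2
  have h2d : ∀ i j (a b c d : α), ((a, b) : α × α) ≠ (c, d) →
      P i a b → P j b a → P i c d → P j d c → False := by
    intro i j a b c d hne h1 h2 h3 h4
    have hmem1 : ((a, b) : α × α) ∈ {p : α × α | P i p.1 p.2 ∧ P j p.2 p.1} := ⟨h1, h2⟩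
    have hmem2 : ((c, d) : α × α) ∈ {p : α × α | P i p.1 p.2 ∧ P j p.2 p.1} := ⟨h3, h4⟩
    have h2le : 1 < swapDist (P i) (P j) := by
      rw [swapDist, Set.one_lt_ncard_iff (Set.toFinite _)]
      exact ⟨(a, b), (c, d), hmem1, hmem2, hne⟩
    have := hd i j
    omega
  have aux : ∀ i j l (a b c d : α), a ≠ b → ((a, b) : α × α) ≠ (c, d) →
      ((a, b) : α × α) ≠ (d, c) → P i a b → P i c d → P j b a → P l d c → False := by
    intro i j l a b c d hab hne1 hne2 hiab hicd hjba hldc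
    have hcd : c ≠ d := by
      intro h; subst h; exact (hP l).irrefl c hldc
    rcases htot l a b hab with hl | hl
    · rcases htot j c d hcd with hj | hj
      · exact h2d l j a b d c hne2 hl hjba hldc hj
      · exact h2d i j a b c d hne1 hiab hjba hicd hj
    · exact h2d i l a b c d hne1 hiab hl hicd hldc
  have hB : ∀ i j k l (a b c d : α), a ≠ b → c ≠ d → ((a, b) : α × α) ≠ (c, d) →
      ((a, b) : α × α) ≠ (d, c) → P i a b → P j b a → P k c d → P l d c → False := by
    intro i j k l a b c d hab hcd hne1 hne2 hiab hjba hkcd hldc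
    rcases htot i c d hcd with hi | hi
    · exact aux i j l a b c d hab hne1 hne2 hiab hi hjba hldc
    · exact aux i j k a b d c hab hne2 hne1 hiab hi hjba hkcd
  -- unanimity on the conclusion pair
  have hT : ∀ (x y z : α), x ≠ y → y ≠ z → x ≠ z →
      ∀ i j, P i x y → P j y z → ∀ k, P k x z := by
    intro x y z hxy hyz hxz i j hi hj k
    by_contra hk
    have hkzx : P k z x := (htot k x z hxz).resolve_left hk
    by_cases hm : ∃ m, P m x z
    · obtain ⟨m, hm⟩ := hm
      have h1 : ∀ t, P t x y := by
        intro t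
        rcases htot t x y hxy with h | h
        · exact h
        · exact absurd (hB i t m k x y x z hxy hxz
            (fun he => hyz (congrArg Prod.snd he))
            (fun he => hxz (congrArg Prod.fst he)) hi h hm hkzx) not_false
      have h2 : ∀ t, P t y z := by
        intro t
        rcases htot t y z hyz with h | h
        · exact h
        · exact absurd (hB j t m k y z x z hyz hxz
            (fun he => hxy (congrArg Prod.fst he).symm)
            (fun he => hyz (congrArg Prod.fst he)) hj h hm hkzx) not_false
      exact hk (htr k x y z (h1 k) (h2 k))
    · have hizx : P i z x := by
        rcases htot i x z hxz with h | h
        · exact absurd ⟨i, h⟩ hm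
        · exact h
      have hjzx : P j z x := by
        rcases htot j x z hxz with h | h
        · exact absurd ⟨j, h⟩ hm
        · exact h
      have hizy : P i z y := htr i z x y hizx hi
      have hjyx : P j y x := htr j y z x hj hjzx
      exact hB i j j i x y y z hxy hyz
        (fun he => hxy (congrArg Prod.fst he))
        (fun he => hxz (congrArg Prod.fst he)) hi hjyx hj hizy
  -- counting lemmas
  have hcompl : ∀ (a b : α), a ≠ b → {i | P i b a} = {i | P i a b}ᶜ := by
    intro a b hab
    ext t
    simp only [Set.mem_setOf_eq, Set.mem_compl_iff]
    constructor
    · exact fun h => hasym t b a h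
    · exact fun h => (htot t a b hab).resolve_left h
  have hsum : ∀ (a b : α), a ≠ b → majCount P a b + majCount P b a = n := by
    intro a b hab
    rw [majCount, majCount, hcompl a b hab,
      Set.ncard_add_ncard_compl _ (Set.toFinite _) (Set.toFinite _),
      Nat.card_eq_fintype_card, Fintype.card_fin]
  have hwit : ∀ (a b : α), a ≠ b → 0 < n → WeakMaj P a b → ∃ i, P i a b := by
    intro a b hab hn hw
    have hs := hsum a b hab
    have : majCount P a b ≠ 0 := by
      unfold WeakMaj at hw; omega
    obtain ⟨i, hi⟩ := Set.nonempty_of_ncard_ne_zero this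
    exact ⟨i, hi⟩
  constructor
  · intro x y
    exact le_total (majCount P y x) (majCount P x y)
  · intro x y z h1 h2
    by_cases hxy : x = y
    · subst hxy; exact h2
    by_cases hyz : y = z
    · subst hyz; exact h1
    by_cases hxz : x = z
    · subst hxz; exact le_refl _
    rcases Nat.eq_zero_or_pos n with hn | hn
    · subst hn
      have hempty : ∀ (a b : α), majCount P a b = 0 := by
        intro a b
        rw [majCount]
        have : {i : Fin 0 | P i a b} = ∅ := Set.eq_empty_of_isEmpty _
        rw [this, Set.ncard_empty]
      show majCount P z x ≤ majCount P x z
      rw [hempty, hempty]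
    · obtain ⟨i, hi⟩ := hwit x y hxy hn h1
      obtain ⟨j, hj⟩ := hwit y z hyz hn h2
      have hall := hT x y z hxy hyz hxz i j hi hj
      have hzero : majCount P z x = 0 := by
        rw [majCount]
        have : {k | P k z x} = ∅ := by
          ext k
          simp only [Set.mem_setOf_eq, Set.mem_empty_iff_false, iff_false]
          exact fun h => hasym k x z (hall k) h
        rw [this, Set.ncard_empty]
      show majCount P z x ≤ majCount P x z
      rw [hzero]
      exact Nat.zero_le _
end

section
/- Let L be a strict linear order (axis) on a finite set 𝒜 and let P_1,...,P_n be strict linear orders on 𝒜 each single-peaked with respect to L. Then for any three alternatives x, y, z, the strict majority relation restricted to {x,y,z} contains no 3-cycle: it is not the case that x ≻_M y, y ≻_M z, and z ≻_M x. -/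
variable {α : Type*}

/-- Key counting lemma: if `b` is never ranked below both `a` and `c`, then we cannot
have both `a ≻_M b` and `c ≻_M a`. -/
lemma key_lemma {n : ℕ} (P : Fin n → α → α → Prop) (hP : ∀ i, IsStrictTotalOrder α (P i))
    {a b c : α} (hab : a ≠ b) (h : ∀ i, P i b a ∨ P i b c) :
    ¬ (StrictMaj P a b ∧ StrictMaj P c a) := by
  rintro ⟨h1, h2⟩
  have habc : ∀ i, P i a b → P i a c := by
    intro i hi
    have hbc : P i b c := by
      rcases h i with hba | hbc
      · exact absurd ((hP i).trans _ _ _ hi hba) ((hP i).irrefl a)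
      · exact hbc
    exact (hP i).trans _ _ _ hi hbc
  have inc1 : {i | P i a b} ⊆ {i | P i a c} := fun i hi => habc i hi
  have inc2 : {i | P i c a} ⊆ {i | P i b a} := by
    intro i hi
    haveI := hP i
    rcases trichotomous_of (P i) b a with h' | h' | h'
    · exact h'
    · exact absurd h'.symm hab
    · exact absurd ((hP i).trans _ _ _ (habc i h') hi) ((hP i).irrefl a)
  have l1 : majCount P a b ≤ majCount P a c := Set.ncard_le_ncard inc1 (Set.toFinite _)
  have l2 : majCount P c a ≤ majCount P b a := Set.ncard_le_ncard inc2 (Set.toFinite _)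
  unfold StrictMaj at h1 h2
  omega

/-- The L-median of a triple is never any single-peaked voter's worst. -/
lemma median_not_worst {n : ℕ} (L : α → α → Prop) (hL : IsStrictTotalOrder α L)
    (P : Fin n → α → α → Prop) (hsp : ∀ i, SinglePeaked L (P i))
    {u m w : α} (h1 : L u m) (h2 : L m w) : ∀ i, P i m u ∨ P i m w := by
  intro i
  obtain ⟨p, -, hsp'⟩ := hsp i
  haveI := hL
  rcases trichotomous_of L p m with hp | hp | hp
  · exact Or.inr (hsp' m w (Or.inl ⟨Or.inl hp, h2⟩))
  · exact Or.inr (hsp' m w (Or.inl ⟨Or.inr hp, h2⟩))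
  · exact Or.inl (hsp' m u (Or.inr ⟨h1, Or.inl hp⟩))

/-- On a single-peaked profile, strict pairwise majority has no 3-cycle. -/
theorem stmt8 [Fintype α] {n : ℕ}
    (L : α → α → Prop) (hL : IsStrictTotalOrder α L)
    (P : Fin n → α → α → Prop) (hP : ∀ i, IsStrictTotalOrder α (P i))
    (hsp : ∀ i, SinglePeaked L (P i)) :
    ∀ x y z : α, ¬ (StrictMaj P x y ∧ StrictMaj P y z ∧ StrictMaj P z x) := by
  rintro x y z ⟨h1, h2, h3⟩
  have hxy : x ≠ y := by rintro rfl; exact lt_irrefl _ h1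
  have hyz : y ≠ z := by rintro rfl; exact lt_irrefl _ h2
  have hzx : z ≠ x := by rintro rfl; exact lt_irrefl _ h3
  -- case on the L-ordering of x, y, z to find the median
  haveI := hL
  rcases trichotomous_of L x y with hxy' | heq | hxy'
  · rcases trichotomous_of L y z with hyz' | heq | hyz'
    · -- x < y < z : median y
      exact key_lemma P hP hxy (median_not_worst L hL P hsp hxy' hyz') ⟨h1, h3⟩
    · exact absurd heq hyz
    · rcases trichotomous_of L x z with hxz' | heq | hxz'
      · -- x < z < y : median z
        exact key_lemma P hP hyz (fun i => (median_not_worst L hL P hsp hxz' hyz' i).symm) ⟨h2, h1⟩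
      · exact absurd heq.symm hzx
      · -- z < x < y : median x
        exact key_lemma P hP hzx (median_not_worst L hL P hsp hxz' hxy') ⟨h3, h2⟩
  · exact absurd heq hxy
  · rcases trichotomous_of L y z with hyz' | heq | hyz'
    · rcases trichotomous_of L x z with hxz' | heq | hxz'
      · -- y < x < z : median x
        exact key_lemma P hP hzx (fun i => (median_not_worst L hL P hsp hxy' hxz' i).symm) ⟨h3, h2⟩
      · exact absurd heq.symm hzx
      · -- y < z < x : median z
        exact key_lemma P hP hyz (median_not_worst L hL P hsp hyz' hxz') ⟨h2, h1⟩
    · exact absurd heq hyz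
    · -- z < y < x : median y
      exact key_lemma P hP hxy (fun i => (median_not_worst L hL P hsp hyz' hxy' i).symm) ⟨h1, h3⟩
end

section
/- Let L be an axis on a finite set 𝒜 and P_1,...,P_n strict linear orders on 𝒜, each single-peaked with respect to L, with n odd. Then the strict pairwise majority relation ≻_M is a strict linear order (complete, asymmetric, transitive) on 𝒜. -/
variable {α : Type*}

/-- Black's theorem: on a single-peaked profile with an odd number of voters,
strict pairwise majority is a strict linear order (complete, asymmetric,
transitive). -/
theorem stmt9 [Fintype α] {n : ℕ} (hodd : Odd n)
    (L : α → α → Prop) (hL : IsStrictTotalOrder α L)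
    (P : Fin n → α → α → Prop) (hP : ∀ i, IsStrictTotalOrder α (P i))
    (hsp : ∀ i, SinglePeaked L (P i)) :
    (∀ x y : α, x ≠ y → StrictMaj P x y ∨ StrictMaj P y x) ∧
      (∀ x y : α, StrictMaj P x y → ¬ StrictMaj P y x) ∧
      Transitive (StrictMaj P) := by
  have asymmP : ∀ i (x y : α), P i x y → ¬ P i y x := fun i x y h h' =>
    (hP i).irrefl x ((hP i).trans _ _ _ h h')
  have hsum : ∀ x y : α, x ≠ y → majCount P x y + majCount P y x = n := by
    intro x y hxy
    have hcompl : {i : Fin n | P i y x} = {i : Fin n | P i x y}ᶜ := by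
      ext i
      simp only [Set.mem_setOf_eq, Set.mem_compl_iff]
      constructor
      · intro h h'; exact asymmP i x y h' h
      · intro h
        rcases (or_iff_not_imp_left.2 fun h₁ => or_iff_not_imp_right.2 fun h₂ => (hP i).trichotomous x y h₁ h₂) with h' | h' | h'
        · exact absurd h' h
        · exact absurd h' hxy
        · exact h'
    unfold majCount
    rw [hcompl, Set.ncard_add_ncard_compl]
    simp
  have hne : ∀ x y : α, StrictMaj P x y → x ≠ y := by
    intro x y h heq
    subst heq
    unfold StrictMaj at h
    omega
  have hgt : ∀ x y : α, StrictMaj P x y → n < 2 * majCount P x y := by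
    intro x y h
    have := hsum x y (hne x y h)
    have h' : majCount P y x < majCount P x y := h
    omega
  have hcomp : ∀ x y : α, x ≠ y → StrictMaj P x y ∨ StrictMaj P y x := by
    intro x y hxy
    rcases lt_trichotomy (majCount P y x) (majCount P x y) with h | h | h
    · exact Or.inl h
    · exfalso
      have hs := hsum x y hxy
      obtain ⟨k, hk⟩ := hodd
      omega
    · exact Or.inr h
  have hasym : ∀ x y : α, StrictMaj P x y → ¬ StrictMaj P y x := fun x y h h' =>
    lt_asymm h h'
  have nocycleMid : ∀ u m w : α, ((L u m ∧ L m w) ∨ (L w m ∧ L m u)) →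
      StrictMaj P u m → StrictMaj P w u → False := by
    intro u m w hbetw h1 h2
    have hA := hgt u m h1
    have hB := hgt w u h2
    obtain ⟨i, hi1, hi2⟩ : ({i : Fin n | P i u m} ∩ {i : Fin n | P i w u}).Nonempty := by
      by_contra hcon
      rw [Set.not_nonempty_iff_eq_empty] at hcon
      have hdisj : Disjoint {i : Fin n | P i u m} {i : Fin n | P i w u} :=
        Set.disjoint_iff_inter_eq_empty.mpr hcon
      have hun := Set.ncard_union_eq hdisj (Set.toFinite _) (Set.toFinite _)
      have hle : ({i : Fin n | P i u m} ∪ {i : Fin n | P i w u}).ncard ≤ n := by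
        have := Set.ncard_le_ncard (Set.subset_univ
          ({i : Fin n | P i u m} ∪ {i : Fin n | P i w u})) (Set.toFinite _)
        simpa [Set.ncard_univ] using this
      unfold majCount at hA hB
      omega
    have hwm : P i w m := (hP i).trans _ _ _ hi2 hi1
    have hmid : P i m u ∨ P i m w := by
      obtain ⟨b, -, hmono⟩ := hsp i
      rcases hbetw with ⟨hum, hmw⟩ | ⟨hwm', hmu⟩
      · rcases (or_iff_not_imp_left.2 fun h₁ => or_iff_not_imp_right.2 fun h₂ => hL.trichotomous b m h₁ h₂) with hbm | hbm | hmb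
        · exact Or.inr (hmono m w (Or.inl ⟨Or.inl hbm, hmw⟩))
        · exact Or.inr (hmono m w (Or.inl ⟨Or.inr hbm, hmw⟩))
        · exact Or.inl (hmono m u (Or.inr ⟨hum, Or.inl hmb⟩))
      · rcases (or_iff_not_imp_left.2 fun h₁ => or_iff_not_imp_right.2 fun h₂ => hL.trichotomous b m h₁ h₂) with hbm | hbm | hmb
        · exact Or.inl (hmono m u (Or.inl ⟨Or.inl hbm, hmu⟩))
        · exact Or.inl (hmono m u (Or.inl ⟨Or.inr hbm, hmu⟩))
        · exact Or.inr (hmono m w (Or.inr ⟨hwm', Or.inl hmb⟩))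
    rcases hmid with h | h
    · exact asymmP i u m hi1 h
    · exact asymmP i w m hwm h
  have nocycle : ∀ x y z : α, StrictMaj P x y → StrictMaj P y z → StrictMaj P z x → False := by
    intro x y z hxy hyz hzx
    have hxyne := hne x y hxy
    have hyzne := hne y z hyz
    have hzxne := hne z x hzx
    rcases (or_iff_not_imp_left.2 fun h₁ => or_iff_not_imp_right.2 fun h₂ => hL.trichotomous x y h₁ h₂) with h1 | h1 | h1
    · rcases (or_iff_not_imp_left.2 fun h₁ => or_iff_not_imp_right.2 fun h₂ => hL.trichotomous y z h₁ h₂) with h2 | h2 | h2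
      · exact nocycleMid x y z (Or.inl ⟨h1, h2⟩) hxy hzx
      · exact hyzne h2
      · rcases (or_iff_not_imp_left.2 fun h₁ => or_iff_not_imp_right.2 fun h₂ => hL.trichotomous x z h₁ h₂) with h3 | h3 | h3
        · exact nocycleMid y z x (Or.inr ⟨h3, h2⟩) hyz hxy
        · exact hzxne h3.symm
        · exact nocycleMid z x y (Or.inl ⟨h3, h1⟩) hzx hyz
    · exact hxyne h1
    · rcases (or_iff_not_imp_left.2 fun h₁ => or_iff_not_imp_right.2 fun h₂ => hL.trichotomous y z h₁ h₂) with h2 | h2 | h2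
      · rcases (or_iff_not_imp_left.2 fun h₁ => or_iff_not_imp_right.2 fun h₂ => hL.trichotomous x z h₁ h₂) with h3 | h3 | h3
        · exact nocycleMid z x y (Or.inr ⟨h1, h3⟩) hzx hyz
        · exact hzxne h3.symm
        · exact nocycleMid y z x (Or.inl ⟨h2, h3⟩) hyz hxy
      · exact hyzne h2
      · exact nocycleMid x y z (Or.inr ⟨h2, h1⟩) hxy hzx
  refine ⟨hcomp, hasym, ?_⟩
  intro x y z hxy hyz
  by_cases hxz : x = z
  · subst hxz
    exact absurd hyz (hasym x y hxy)
  · rcases hcomp x z hxz with h | h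
    · exact h
    · exact absurd h (fun h' => nocycle x y z hxy hyz h')
end

section
/- Let ≽ be a complete binary relation on a finite set 𝒜 with strict part ≻, and suppose there exists a strict linear order P on 𝒜 and a single pair {A, A'} such that ≻ agrees with P on every pair except possibly {A, A'}, where A and A' are adjacent in P. Then ≽ is transitive. -/
variable {α : Type*}

/-- A complete relation whose strict part agrees with a strict linear order `P`
on every pair except possibly a single pair adjacent in `P` is transitive. -/
theorem stmt15 [Fintype α] (R : α → α → Prop)
    (hcomp : ∀ x y : α, R x y ∨ R y x)
    (P : α → α → Prop) (hP : IsStrictTotalOrder α P)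
    (A A' : α) (hadj : Adjacent P A A')
    (hagree : ∀ x y : α, ({x, y} : Set α) ≠ ({A, A'} : Set α) →
      ((R x y ∧ ¬ R y x) ↔ P x y)) :
    Transitive R := by
  obtain ⟨hAA', hbet⟩ := hadj
  have hRP : ∀ x y, x ≠ y → ({x, y} : Set α) ≠ ({A, A'} : Set α) → R x y → P x y := by
    intro x y hne hs hr
    rcases (haveI := hP; (trichotomous x y : P x y ∨ x = y ∨ P y x)) with h | h | h
    · exact h
    · exact absurd h hne
    · exact absurd hr ((hagree y x (by rwa [Set.pair_comm])).mpr h).2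
  have hPR : ∀ x y, ({x, y} : Set α) ≠ ({A, A'} : Set α) → P x y → R x y :=
    fun x y hs h => ((hagree x y hs).mpr h).1
  have hns : ∀ u v : α, v ≠ A → v ≠ A' → ({u, v} : Set α) ≠ ({A, A'} : Set α) := by
    intro u v h1 h2 h
    rcases Set.pair_eq_pair_iff.mp h with ⟨_, hv⟩ | ⟨_, hv⟩
    · exact h2 hv
    · exact h1 hv
  have hns' : ∀ u v : α, u ≠ A → u ≠ A' → ({u, v} : Set α) ≠ ({A, A'} : Set α) := by
    intro u v h1 h2 h
    exact hns v u h1 h2 (by rwa [Set.pair_comm])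
  intro x y z hxy hyz
  by_cases hxy' : x = y
  · subst hxy'; exact hyz
  by_cases hyz' : y = z
  · subst hyz'; exact hxy
  by_cases hxz' : x = z
  · subst hxz'; exact (hcomp x x).elim id id
  by_cases s1 : ({x, y} : Set α) = ({A, A'} : Set α)
  · -- z is outside {A, A'}
    have hzA : z ≠ A ∧ z ≠ A' := by
      rcases Set.pair_eq_pair_iff.mp s1 with ⟨hx, hy⟩ | ⟨hx, hy⟩
      · exact ⟨fun h => hxz' (hx.trans h.symm), fun h => hyz' (hy.trans h.symm)⟩
      · exact ⟨fun h => hyz' (hy.trans h.symm), fun h => hxz' (hx.trans h.symm)⟩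
    have hyzP : P y z := hRP y z hyz' (hns y z hzA.1 hzA.2) hyz
    have hxzns := hns x z hzA.1 hzA.2
    rcases Set.pair_eq_pair_iff.mp s1 with ⟨hx, hy⟩ | ⟨hx, hy⟩
    · subst hx; subst hy
      exact hPR x z hxzns (hP.trans _ _ _ hAA' hyzP)
    · subst hx; subst hy
      rcases (haveI := hP; (trichotomous x z : P x z ∨ x = z ∨ P z x)) with h | h | h
      · exact hPR x z hxzns h
      · exact absurd h hxz'
      · exact absurd ⟨z, hyzP, h⟩ hbet
  by_cases s2 : ({y, z} : Set α) = ({A, A'} : Set α)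
  · have hxA : x ≠ A ∧ x ≠ A' := by
      rcases Set.pair_eq_pair_iff.mp s2 with ⟨hy, hz⟩ | ⟨hy, hz⟩
      · exact ⟨fun h => hxy' (h.trans hy.symm), fun h => hxz' (h.trans hz.symm)⟩
      · exact ⟨fun h => hxz' (h.trans hz.symm), fun h => hxy' (h.trans hy.symm)⟩
    have hxyP : P x y := hRP x y hxy' (hns' x y hxA.1 hxA.2) hxy
    have hxzns := hns' x z hxA.1 hxA.2
    rcases Set.pair_eq_pair_iff.mp s2 with ⟨hy, hz⟩ | ⟨hy, hz⟩
    · subst hy; subst hz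
      exact hPR x z hxzns (hP.trans _ _ _ hxyP hAA')
    · subst hy; subst hz
      rcases (haveI := hP; (trichotomous x z : P x z ∨ x = z ∨ P z x)) with h | h | h
      · exact hPR x z hxzns h
      · exact absurd h hxz'
      · exact absurd ⟨x, h, hxyP⟩ hbet
  · -- neither {x,y} nor {y,z} is special; is {x,z}?
    have hxyP : P x y := hRP x y hxy' s1 hxy
    have hyzP : P y z := hRP y z hyz' s2 hyz
    have hxzP : P x z := hP.trans _ _ _ hxyP hyzP
    by_cases s3 : ({x, z} : Set α) = ({A, A'} : Set α)
    · rcases Set.pair_eq_pair_iff.mp s3 with ⟨hx, hz⟩ | ⟨hx, hz⟩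
      · subst hx; subst hz
        exact absurd ⟨y, hxyP, hyzP⟩ hbet
      · subst hx; subst hz
        exact absurd (hP.trans _ _ _ hAA' hxzP) (hP.irrefl _)
    · exact hPR x z s3 hxzP
end
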